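/- arXiv:1206.2792 — 4 statements merged into one kernel-verified Lean document; each statement's English description precedes it below -/
import Mathlib

section
/- For every real x ≥ 1, |∑_{n ≤ x} μ(n)/n| ≤ 1. -/
open Finset ArithmeticFunction

lemma sum_moebius_mul_div (N : ℕ) (hN : 1 ≤ N) :
    ∑ n ∈ Finset.Icc 1 N, (ArithmeticFunction.moebius n : ℤ) * (N / n : ℕ) = 1 := by
  have hIcc : Finset.Icc 1 N = Finset.Ioc 0 N := rfl
  rw [hIcc]
  have h1 : ∀ n ∈ Finset.Ioc 0 N,
      (ArithmeticFunction.moebius n : ℤ) * (N / n : ℕ)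
        = ∑ m ∈ (Finset.Ioc 0 N).filter (n ∣ ·), (ArithmeticFunction.moebius n : ℤ) := by
    intro n _
    rw [Finset.sum_const, ← Nat.Ioc_filter_dvd_card_eq_div N n]
    push_cast [mul_comm]
    ring
  rw [Finset.sum_congr rfl h1]
  have h2 : ∑ n ∈ Finset.Ioc 0 N, ∑ m ∈ (Finset.Ioc 0 N).filter (n ∣ ·),
      (ArithmeticFunction.moebius n : ℤ)
      = ∑ m ∈ Finset.Ioc 0 N, ∑ n ∈ (Finset.Ioc 0 N).filter (· ∣ m),
      (ArithmeticFunction.moebius n : ℤ) := by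
    simp_rw [Finset.sum_filter]
    exact Finset.sum_comm
  rw [h2]
  have h3 : ∀ m ∈ Finset.Ioc 0 N,
      (Finset.Ioc 0 N).filter (· ∣ m) = m.divisors := by
    intro m hm
    rw [Finset.mem_Ioc] at hm
    ext d
    simp only [Finset.mem_filter, Finset.mem_Ioc, Nat.mem_divisors]
    constructor
    · rintro ⟨_, hd⟩
      exact ⟨hd, by omega⟩
    · rintro ⟨hd, _⟩
      exact ⟨⟨Nat.pos_of_dvd_of_pos hd hm.1, (Nat.le_of_dvd hm.1 hd).trans hm.2⟩, hd⟩
  rw [Finset.sum_congr rfl (fun m hm => by rw [h3 m hm])]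
  have h4 : ∀ m : ℕ, ∑ n ∈ m.divisors, (ArithmeticFunction.moebius n : ℤ)
      = if m = 1 then 1 else 0 := by
    intro m
    rw [← ArithmeticFunction.coe_mul_zeta_apply, ArithmeticFunction.moebius_mul_coe_zeta,
      ArithmeticFunction.one_apply]
  rw [Finset.sum_congr rfl fun m _ => h4 m, Finset.sum_ite_eq' (Finset.Ioc 0 N) 1]
  simp [hN]

theorem moebius_over_n_le_one (x : ℝ) (hx : 1 ≤ x) :
    |∑ n ∈ Finset.Icc 1 ⌊x⌋₊, (ArithmeticFunction.moebius n : ℝ) / n| ≤ 1 := by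
  set N := ⌊x⌋₊ with hNdef
  have hN : 1 ≤ N := Nat.one_le_floor_iff x |>.mpr hx
  set S := ∑ n ∈ Finset.Icc 1 N, (ArithmeticFunction.moebius n : ℝ) / n with hS
  have hNpos : (0 : ℝ) < N := by exact_mod_cast hN
  -- key identity over ℝ
  have key : ∑ n ∈ Finset.Icc 1 N, (ArithmeticFunction.moebius n : ℝ) * (N / n : ℕ) = 1 := by
    have h := sum_moebius_mul_div N hN
    have := congrArg (fun z : ℤ => (z : ℝ)) h
    push_cast at this
    convert this using 2
    congr 1
  have hNS : (N : ℝ) * S = 1 + ∑ n ∈ Finset.Icc 1 N,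
      (ArithmeticFunction.moebius n : ℝ) * ((N : ℝ) / n - ((N / n : ℕ) : ℝ)) := by
    rw [hS, Finset.mul_sum, ← key, ← Finset.sum_add_distrib]
    apply Finset.sum_congr rfl
    intro n hn
    have hn1 : (1 : ℕ) ≤ n := (Finset.mem_Icc.mp hn).1
    have hnpos : (0 : ℝ) < n := by exact_mod_cast hn1
    field_simp
    ring
  -- bound the error sum
  have hbound : |∑ n ∈ Finset.Icc 1 N,
      (ArithmeticFunction.moebius n : ℝ) * ((N : ℝ) / n - ((N / n : ℕ) : ℝ))|
      ≤ (N : ℝ) - 1 := by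
    calc |∑ n ∈ Finset.Icc 1 N,
        (ArithmeticFunction.moebius n : ℝ) * ((N : ℝ) / n - ((N / n : ℕ) : ℝ))|
        ≤ ∑ n ∈ Finset.Icc 1 N,
          |(ArithmeticFunction.moebius n : ℝ) * ((N : ℝ) / n - ((N / n : ℕ) : ℝ))| :=
          Finset.abs_sum_le_sum_abs _ _
      _ ≤ ∑ n ∈ Finset.Icc 1 N, (if n = 1 then 0 else 1) := by
          apply Finset.sum_le_sum
          intro n hn
          have hn1 : (1 : ℕ) ≤ n := (Finset.mem_Icc.mp hn).1
          have hnpos : (0 : ℝ) < n := by exact_mod_cast hn1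
          by_cases h1 : n = 1
          · subst h1
            simp
          · simp only [h1, if_false]
            rw [abs_mul]
            have hmu : |(ArithmeticFunction.moebius n : ℝ)| ≤ 1 := by
              have := ArithmeticFunction.abs_moebius_le_one (n := n)
              exact_mod_cast this
            have hfrac : |(N : ℝ) / n - ((N / n : ℕ) : ℝ)| ≤ 1 := by
              rw [abs_le]
              constructor
              · have : ((N / n : ℕ) : ℝ) ≤ (N : ℝ) / n := Nat.cast_div_le
                linarith
              · have hlt : (N : ℕ) < (N / n + 1) * n := by
                  have := Nat.div_add_mod N n
                  have h2 : N % n < n := Nat.mod_lt N (by omega)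
                  nlinarith
                have : (N : ℝ) < ((N / n : ℕ) + 1) * n := by exact_mod_cast hlt
                rw [sub_le_iff_le_add, div_le_iff₀ hnpos]
                nlinarith
            calc |(ArithmeticFunction.moebius n : ℝ)| * |(N : ℝ) / n - ((N / n : ℕ) : ℝ)|
                ≤ 1 * 1 := mul_le_mul hmu hfrac (abs_nonneg _) zero_le_one
              _ = 1 := one_mul 1
      _ = (N : ℝ) - 1 := by
          have hrw : ∀ n : ℕ, (if n = 1 then (0:ℝ) else 1) = 1 - (if n = 1 then 1 else 0) := by
            intro n; split <;> ring
          simp_rw [hrw, Finset.sum_sub_distrib, Finset.sum_const,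
            Finset.sum_ite_eq' (Finset.Icc 1 N) 1 (fun _ => (1:ℝ))]
          simp [hN, Nat.card_Icc]
  have : |(N : ℝ) * S| ≤ N := by
    rw [hNS]
    calc |1 + _| ≤ 1 + ((N : ℝ) - 1) := by
          refine (abs_add_le _ _).trans ?_
          simp only [abs_one]
          linarith [hbound]
      _ = N := by ring
  rw [abs_mul, abs_of_pos hNpos] at this
  exact (mul_le_mul_iff_right₀ hNpos).mp (this.trans_eq (mul_one (N:ℝ)).symm)
end

section
/- ∑_{n ≤ x} {x/n} = (1 − γ)x + O(√x), where γ is the Euler–Mascheroni constant; i.e., there is a constant C with |∑_{n ≤ x} {x/n} − (1−γ)x| ≤ C√x for all x ≥ 1. -/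
open Finset Real

-- harmonic sum as Icc sum
lemma harmonic_eq_Icc (n : ℕ) : (harmonic n : ℝ) = ∑ i ∈ Icc 1 n, ((i:ℝ))⁻¹ := by
  rw [harmonic, ← Finset.Ico_add_one_right_eq_Icc, Finset.sum_Ico_eq_sum_range]
  push_cast
  simp [add_comm]

lemma harm_bound (n : ℕ) (hn : 1 ≤ n) :
    0 ≤ (harmonic n : ℝ) - Real.log n - Real.eulerMascheroniConstant ∧
      (harmonic n : ℝ) - Real.log n - Real.eulerMascheroniConstant ≤ 1 / n := by
  have hn0 : (0:ℝ) < n := by exact_mod_cast hn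
  have h1 : Real.eulerMascheroniConstant < (harmonic n : ℝ) - Real.log n := by
    have := Real.eulerMascheroniConstant_lt_eulerMascheroniSeq' n
    rwa [Real.eulerMascheroniSeq', if_neg (by omega)] at this
  have h2 : (harmonic n : ℝ) - Real.log (n + 1) < Real.eulerMascheroniConstant := by
    have := Real.eulerMascheroniSeq_lt_eulerMascheroniConstant n
    rwa [Real.eulerMascheroniSeq] at this
  have h3 : Real.log (n + 1) - Real.log n ≤ 1 / n := by
    rw [← Real.log_div (by positivity) (by positivity)]
    have := Real.log_le_sub_one_of_pos (show (0:ℝ) < (n+1)/n by positivity)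
    have e : ((n:ℝ)+1)/n - 1 = 1/n := by field_simp; ring
    linarith
  constructor <;> linarith

lemma hyperbola (M : ℕ) (hM : 1 ≤ M) :
    (∑ n ∈ Icc 1 M, M / n) + M.sqrt * M.sqrt = 2 * ∑ n ∈ Icc 1 M.sqrt, M / n := by
  set K := M.sqrt with hK
  have hK1 : 1 ≤ K := Nat.sqrt_pos.mpr hM
  have hKM : K ≤ M := Nat.sqrt_le_self M
  have hKK : K * K ≤ M := by have h := Nat.sqrt_le' M; rwa [pow_two] at h
  have hMKK : M < (K+1) * (K+1) := by
    have h := Nat.lt_succ_sqrt' M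
    rwa [Nat.succ_eq_add_one, pow_two] at h
  have hsplit : (∑ n ∈ Icc 1 M, M / n)
      = (∑ n ∈ Icc 1 K, M / n) + ∑ n ∈ Ioc K M, M / n := by
    rw [show (Icc 1 M) = Ioc 0 M by rw [← Finset.Icc_add_one_left_eq_Ioc, zero_add],
        show (Icc 1 K) = Ioc 0 K by rw [← Finset.Icc_add_one_left_eq_Ioc, zero_add],
        Finset.sum_Ioc_consecutive _ (Nat.zero_le K) hKM]
  have htail : ∑ a ∈ Ioc K M, M / a
      = ∑ b ∈ Icc 1 K, ((Ioc K M).filter (fun a => a * b ≤ M)).card := by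
    have h1 : ∀ a ∈ Ioc K M, M / a = ((Icc 1 K).filter (fun b => a * b ≤ M)).card := by
      intro a ha
      rw [Finset.mem_Ioc] at ha
      have ha0 : 0 < a := lt_of_le_of_lt (Nat.zero_le K) ha.1
      have hdle : M / a ≤ K := by
        have h4 : M / a < K + 1 :=
          lt_of_le_of_lt (Nat.div_le_div_left ha.1 (Nat.succ_pos K))
            (Nat.div_lt_of_lt_mul hMKK)
        omega
      have heq : (Icc 1 K).filter (fun b => a * b ≤ M) = Icc 1 (M / a) := by
        ext b
        simp only [Finset.mem_filter, Finset.mem_Icc]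
        constructor
        · rintro ⟨⟨h1b, _⟩, h3⟩
          exact ⟨h1b, (Nat.le_div_iff_mul_le ha0).mpr (by rwa [Nat.mul_comm])⟩
        · rintro ⟨h1b, h2b⟩
          have := (Nat.le_div_iff_mul_le ha0).mp h2b
          exact ⟨⟨h1b, le_trans h2b hdle⟩, by rwa [Nat.mul_comm] at this⟩
      rw [heq, Nat.card_Icc, Nat.add_sub_cancel]
    rw [Finset.sum_congr rfl h1]
    simp_rw [Finset.card_filter]
    exact Finset.sum_comm
  have hbig : ∀ b ∈ Icc 1 K, K ≤ M / b := by
    intro b hb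
    rw [Finset.mem_Icc] at hb
    exact (Nat.le_div_iff_mul_le hb.1).mpr
      (le_trans (Nat.mul_le_mul_left K hb.2) hKK)
  have hcount : ∀ b ∈ Icc 1 K, ((Ioc K M).filter (fun a => a * b ≤ M)).card = M / b - K := by
    intro b hb
    have hbK := hbig b hb
    rw [Finset.mem_Icc] at hb
    have hb0 : 0 < b := hb.1
    have heq : (Ioc K M).filter (fun a => a * b ≤ M) = Ioc K (M / b) := by
      ext a
      simp only [Finset.mem_filter, Finset.mem_Ioc]
      constructor
      · rintro ⟨⟨h1a, _⟩, h3⟩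
        exact ⟨h1a, (Nat.le_div_iff_mul_le hb0).mpr h3⟩
      · rintro ⟨h1a, h2a⟩
        exact ⟨⟨h1a, le_trans h2a (Nat.div_le_self M b)⟩,
          (Nat.le_div_iff_mul_le hb0).mp h2a⟩
    rw [heq, Nat.card_Ioc]
  rw [hsplit, htail, Finset.sum_congr rfl hcount]
  have hKKsum : K * K = ∑ _b ∈ Icc 1 K, K := by
    rw [Finset.sum_const, Nat.card_Icc]
    simp [Nat.mul_comm]
  rw [add_assoc, hKKsum, ← Finset.sum_add_distrib]
  have : ∑ b ∈ Icc 1 K, (M / b - K + K) = ∑ b ∈ Icc 1 K, M / b :=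
    Finset.sum_congr rfl (fun b hb => Nat.sub_add_cancel (hbig b hb))
  rw [this]
  ring

set_option maxHeartbeats 1000000 in
theorem fract_sum_asymptotic :
    ∃ C : ℝ, ∀ x : ℝ, 1 ≤ x →
      |(∑ n ∈ Finset.Icc 1 ⌊x⌋₊, Int.fract (x / n)) -
          (1 - Real.eulerMascheroniConstant) * x| ≤ C * Real.sqrt x := by
  use 14
  intro x hx
  have hx0 : (0:ℝ) < x := by linarith
  set γ := Real.eulerMascheroniConstant with hγ
  set M := ⌊x⌋₊ with hMdef
  set K := M.sqrt with hKdef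
  have hM1 : 1 ≤ M := Nat.le_floor (by exact_mod_cast hx)
  have hK1 : 1 ≤ K := Nat.sqrt_pos.mpr hM1
  set s := Real.sqrt x with hsdef
  have hs0 : 0 ≤ s := Real.sqrt_nonneg x
  have hs2 : s ^ 2 = x := Real.sq_sqrt (le_of_lt hx0)
  have hs1 : 1 ≤ s := by nlinarith
  -- real facts
  have hMx : (M:ℝ) ≤ x := Nat.floor_le (le_of_lt hx0)
  have hxM : x < (M:ℝ) + 1 := Nat.lt_floor_add_one x
  have hM1' : (1:ℝ) ≤ M := by exact_mod_cast hM1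
  have hK1' : (1:ℝ) ≤ K := by exact_mod_cast hK1
  have hKKn : K * K ≤ M := by have h := Nat.sqrt_le' M; rwa [pow_two] at h
  have hMKKn : M + 1 ≤ (K+1) * (K+1) := by
    have h := Nat.lt_succ_sqrt' M
    rw [Nat.succ_eq_add_one, pow_two] at h
    exact h
  have hKK : ((K:ℝ)) * K ≤ M := by exact_mod_cast hKKn
  have hMKK : (M:ℝ) + 1 ≤ ((K:ℝ)+1) * (K+1) := by exact_mod_cast hMKKn
  have hKs : (K:ℝ) ≤ s := by
    have h1 : (K:ℝ) = Real.sqrt ((K:ℝ)^2) := (Real.sqrt_sq (by positivity)).symm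
    rw [h1, hsdef]
    exact Real.sqrt_le_sqrt (by nlinarith)
  have hsK : s < (K:ℝ) + 1 := by
    have h1 : ((K:ℝ)+1) = Real.sqrt (((K:ℝ)+1)^2) := (Real.sqrt_sq (by positivity)).symm
    rw [h1, hsdef]
    exact Real.sqrt_lt_sqrt (le_of_lt hx0) (by rw [pow_two]; linarith)
  clear_value γ M K s
  -- fract identity
  have hfr : ∀ n : ℕ, 0 < n → Int.fract (x / n) = x * ((n:ℝ))⁻¹ - ((M / n : ℕ) : ℝ) := by
    intro n hn
    have hn0 : (0:ℝ) < n := by exact_mod_cast hn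
    have hnon : (0:ℝ) ≤ x / n := by positivity
    rw [Int.fract, ← natCast_floor_eq_intCast_floor hnon, Nat.floor_div_natCast, div_eq_mul_inv, hMdef]
  -- sums
  set HM := ∑ n ∈ Icc 1 M, ((n:ℝ))⁻¹ with hHM
  set HK := ∑ n ∈ Icc 1 K, ((n:ℝ))⁻¹ with hHK
  set DM := ∑ n ∈ Icc 1 M, ((M / n : ℕ) : ℝ) with hDM
  set DK := ∑ n ∈ Icc 1 K, ((M / n : ℕ) : ℝ) with hDK
  set E := ∑ n ∈ Icc 1 K, Int.fract (x / n) with hE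
  clear_value HM HK DM DK E
  have hSum : (∑ n ∈ Icc 1 M, Int.fract (x / n)) = x * HM - DM := by
    rw [hHM, hDM, Finset.mul_sum, ← Finset.sum_sub_distrib]
    refine Finset.sum_congr rfl (fun n hn => ?_)
    rw [Finset.mem_Icc] at hn
    exact hfr n hn.1
  have hEval : E = x * HK - DK := by
    rw [hE, hHK, hDK, Finset.mul_sum, ← Finset.sum_sub_distrib]
    refine Finset.sum_congr rfl (fun n hn => ?_)
    rw [Finset.mem_Icc] at hn
    exact hfr n hn.1
  have hhyp : DM + (K:ℝ) * K = 2 * DK := by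
    have := hyperbola M hM1
    rw [← hKdef] at this
    rw [hDM, hDK, ← Nat.cast_sum, ← Nat.cast_sum]
    exact_mod_cast this
  -- E bounds
  have hE0 : 0 ≤ E := by
    rw [hE]; exact Finset.sum_nonneg (fun n _ => Int.fract_nonneg _)
  have hE1 : E ≤ K := by
    rw [hE]
    calc (∑ n ∈ Icc 1 K, Int.fract (x / n)) ≤ ∑ _n ∈ Icc 1 K, (1:ℝ) :=
          Finset.sum_le_sum (fun n _ => le_of_lt (Int.fract_lt_one _))
    _ = K := by simp [Nat.card_Icc]
  -- harmonic bounds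
  have hA := harm_bound M hM1
  have hB := harm_bound K hK1
  rw [harmonic_eq_Icc, ← hHM, ← hγ] at hA
  rw [harmonic_eq_Icc, ← hHK, ← hγ] at hB
  set A := HM - Real.log M - γ with hAdef
  set B := HK - Real.log K - γ with hBdef
  -- log term
  set L := Real.log M - 2 * Real.log K with hLdef
  clear_value A B L
  have hL0 : 0 ≤ L := by
    rw [hLdef]
    have : Real.log ((K:ℝ) * K) ≤ Real.log M :=
      Real.log_le_log (by positivity) hKK
    rw [Real.log_mul (by positivity) (by positivity)] at this
    linarith
  have hL1 : L ≤ 2 / K := by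
    rw [hLdef]
    have hlog : Real.log ((M:ℝ) / ((K:ℝ) * K)) ≤ (M:ℝ) / ((K:ℝ)*K) - 1 :=
      Real.log_le_sub_one_of_pos (by positivity)
    rw [Real.log_div (by positivity) (by positivity),
        Real.log_mul (by positivity) (by positivity)] at hlog
    have h2 : (M:ℝ) / ((K:ℝ)*K) - 1 ≤ 2 / K := by
      rw [div_sub_one (by positivity), div_le_div_iff₀ (by positivity) (by positivity)]
      nlinarith
    linarith
  -- final
  rw [hSum]
  have key : x * HM - DM - (1 - γ) * x
      = x * A - 2 * x * B + x * L + 2 * E + ((K:ℝ) * K - x) := by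
    rw [hAdef, hBdef, hLdef]
    have hDMeq : DM = 2 * (x * HK - E) - (K:ℝ) * K := by
      linarith [hEval, hhyp]
    rw [hDMeq]; ring
  rw [key]
  -- bounds on pieces
  have hxA0 : 0 ≤ x * A := mul_nonneg (le_of_lt hx0) hA.1
  have hxA1 : x * A ≤ 2 * s := by
    have h1 : x * A ≤ x * (1 / M) := mul_le_mul_of_nonneg_left hA.2 (le_of_lt hx0)
    have h2 : x * (1 / M) ≤ 2 := by
      rw [mul_one_div, div_le_iff₀ (by positivity)]
      linarith
    linarith
  have hxK : x * (1 / K) ≤ 2 * s := by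
    rw [mul_one_div, div_le_iff₀ (by positivity)]
    nlinarith
  have hxB0 : 0 ≤ x * B := mul_nonneg (le_of_lt hx0) hB.1
  have hxB1 : x * B ≤ 2 * s := by
    have h1 : x * B ≤ x * (1 / K) := mul_le_mul_of_nonneg_left hB.2 (le_of_lt hx0)
    linarith
  have hxL0 : 0 ≤ x * L := mul_nonneg (le_of_lt hx0) hL0
  have hxL1 : x * L ≤ 4 * s := by
    have h1 : x * L ≤ x * (2 / K) := mul_le_mul_of_nonneg_left hL1 (le_of_lt hx0)
    have h2 : x * (2 / K) = 2 * (x * (1 / K)) := by ring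
    linarith
  have hKx0 : (K:ℝ) * K - x ≤ 0 := by linarith
  have hKx1 : -(2 * s) ≤ (K:ℝ) * K - x := by nlinarith
  rw [abs_le]
  constructor <;> linarith
end

section
/- ∑_{n ≤ x} φ(n)/n = (6/π²)x + O(log x); explicitly, there is an absolute constant C such that |∑_{n ≤ x} φ(n)/n − (6/π²)x| ≤ C·(log x + 1) for all x ≥ 1. -/
open Finset ArithmeticFunction LSeries.notation
open scoped ArithmeticFunction.Moebius ArithmeticFunction.zeta

private lemma summable_mu_aux : Summable (fun d : ℕ => (μ d : ℝ) / d ^ 2) := by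
  rw [← summable_abs_iff]
  apply Summable.of_nonneg_of_le (fun d => abs_nonneg _) (fun d => ?_)
    ((Real.summable_one_div_nat_pow (p := 2)).mpr one_lt_two)
  rw [abs_div, abs_pow, Nat.abs_cast]
  gcongr
  exact_mod_cast (abs_moebius_le_one (n := d))

private lemma tsum_mu_aux : ∑' d : ℕ, (μ d : ℝ) / d ^ 2 = 6 / Real.pi ^ 2 := by
  have h2 : (1 : ℝ) < (2 : ℂ).re := by norm_num
  have hz := LSeries_zeta_mul_Lseries_moebius h2
  rw [LSeries_zeta_eq_riemannZeta h2, riemannZeta_two] at hz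
  have hL : LSeries ↗μ 2 = 6 / (Real.pi : ℂ) ^ 2 := by
    have hpi : ((Real.pi : ℂ)) ^ 2 ≠ 0 := by
      simpa using Complex.ofReal_ne_zero.mpr Real.pi_ne_zero
    field_simp at hz ⊢
    linear_combination hz
  have hterm : ∀ n : ℕ, ((((μ n : ℝ) / n ^ 2 : ℝ)) : ℂ) = LSeries.term ↗μ 2 n := by
    intro n
    rcases eq_or_ne n 0 with rfl | hn
    · simp [LSeries.term]
    · rw [LSeries.term_of_ne_zero hn]
      push_cast
      rw [show ((2 : ℂ)) = ((2 : ℕ) : ℂ) by norm_num, Complex.cpow_natCast]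
  have key : ((∑' d : ℕ, (μ d : ℝ) / d ^ 2 : ℝ) : ℂ) = ((6 / Real.pi ^ 2 : ℝ) : ℂ) := by
    rw [Complex.ofReal_tsum]
    simp_rw [hterm]
    rw [← LSeries, hL]
    push_cast
    ring
  exact_mod_cast key

private lemma telescope_hasSum_aux (N : ℕ) (hN : 1 ≤ N) :
    HasSum (fun k : ℕ => 1 / ((k + N : ℕ) : ℝ) - 1 / ((k + N + 1 : ℕ) : ℝ)) (1 / N) := by
  have hnn : ∀ k : ℕ, 0 ≤ 1 / ((k + N : ℕ) : ℝ) - 1 / ((k + N + 1 : ℕ) : ℝ) := by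
    intro k
    have h1 : (0:ℝ) < ((k + N : ℕ) : ℝ) := by
      have : 0 < k + N := by omega
      exact_mod_cast this
    rw [sub_nonneg]
    apply one_div_le_one_div_of_le h1
    exact_mod_cast Nat.le_succ _
  rw [hasSum_iff_tendsto_nat_of_nonneg hnn]
  have heq : ∀ n : ℕ, ∑ k ∈ range n, (1 / ((k + N : ℕ) : ℝ) - 1 / ((k + N + 1 : ℕ) : ℝ))
      = 1 / N - 1 / ((n + N : ℕ) : ℝ) := by
    intro n
    have := Finset.sum_range_sub' (f := fun k => 1 / ((k + N : ℕ) : ℝ)) n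
    simp only [zero_add] at this
    rw [← this]
    refine Finset.sum_congr rfl fun k _ => ?_
    push_cast
    ring_nf
  simp_rw [heq]
  have : Filter.Tendsto (fun n : ℕ => 1 / ((n + N : ℕ) : ℝ)) Filter.atTop (nhds 0) := by
    apply Filter.Tendsto.comp tendsto_one_div_atTop_nhds_zero_nat ?_
    exact Filter.tendsto_atTop_atTop.mpr fun b => ⟨b, fun a ha => by omega⟩
  simpa using Filter.Tendsto.sub tendsto_const_nhds this

private lemma tail_bound_aux (N : ℕ) (hN : 1 ≤ N) :
    |(∑' d : ℕ, (μ d : ℝ) / d ^ 2) - ∑ d ∈ Finset.Icc 1 N, (μ d : ℝ) / d ^ 2| ≤ 1 / N := by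
  have hs : Summable (fun d : ℕ => (μ d : ℝ) / d ^ 2) := summable_mu_aux
  have hIcc : ∑ d ∈ Finset.range (N + 1), (μ d : ℝ) / d ^ 2
      = ∑ d ∈ Finset.Icc 1 N, (μ d : ℝ) / d ^ 2 := by
    rw [Finset.range_eq_Ico, Finset.sum_eq_sum_Ico_succ_bot (Nat.succ_pos N),
      Nat.succ_eq_add_one, Finset.Ico_add_one_right_eq_Icc]
    simp
  have hsplit := Summable.sum_add_tsum_nat_add (N + 1) hs
  rw [← hIcc, ← hsplit]
  rw [add_sub_cancel_left]
  have htel := telescope_hasSum_aux N hN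
  have hsum2 : Summable (fun k : ℕ => 1 / ((k + N : ℕ) : ℝ) - 1 / ((k + N + 1 : ℕ) : ℝ)) :=
    htel.summable
  calc |∑' k : ℕ, (μ (k + (N + 1)) : ℝ) / (k + (N + 1) : ℕ) ^ 2|
      ≤ ∑' k : ℕ, |(μ (k + (N + 1)) : ℝ) / (k + (N + 1) : ℕ) ^ 2| := by
        simpa only [Real.norm_eq_abs] using
          norm_tsum_le_tsum_norm (f := fun k : ℕ => (μ (k + (N + 1)) : ℝ) / (k + (N + 1) : ℕ) ^ 2)
            (by simpa only [Real.norm_eq_abs, Function.comp_def] using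
              (hs.abs.comp_injective (add_left_injective (N+1))))
    _ ≤ ∑' k : ℕ, (1 / ((k + N : ℕ) : ℝ) - 1 / ((k + N + 1 : ℕ) : ℝ)) := by
        apply Summable.tsum_le_tsum _ _ hsum2
        · intro k
          have h1 : (0:ℝ) < ((k + N : ℕ) : ℝ) := by
            have hk : 0 < k + N := by omega
            exact_mod_cast hk
          have h2 : (0:ℝ) < ((k + N + 1 : ℕ) : ℝ) := by positivity
          rw [abs_div, abs_pow, Nat.abs_cast]
          have hmu : |(μ (k + (N + 1)) : ℝ)| ≤ 1 := by
            exact_mod_cast (abs_moebius_le_one (n := k + (N + 1)))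
          have key : (1:ℝ) / ((k + (N+1) : ℕ) : ℝ) ^ 2
              ≤ 1 / ((k + N : ℕ) : ℝ) - 1 / ((k + N + 1 : ℕ) : ℝ) := by
            have e : ((k + (N+1) : ℕ) : ℝ) = ((k + N : ℕ) : ℝ) + 1 := by push_cast; ring
            rw [e, div_sub_div _ _ (ne_of_gt h1) (by push_cast; positivity)]
            rw [div_le_div_iff₀ (by positivity) (by push_cast; positivity)]
            push_cast
            nlinarith [h1]
          refine le_trans ?_ key
          calc |(μ (k + (N + 1)) : ℝ)| / ((k + (N+1) : ℕ) : ℝ) ^ 2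
              ≤ 1 / ((k + (N+1) : ℕ) : ℝ) ^ 2 := by gcongr
            _ = _ := rfl
        · apply hs.abs.comp_injective (add_left_injective (N+1))
    _ = 1 / N := htel.tsum_eq

private lemma totient_div_eq_aux (n : ℕ) (hn : 0 < n) :
    (Nat.totient n : ℝ) / n = ∑ d ∈ n.divisors, (μ d : ℝ) / d := by
  have hinv := (sum_eq_iff_sum_mul_moebius_eq (R := ℝ)
    (f := fun d => (Nat.totient d : ℝ)) (g := fun n => (n : ℝ))).mp
    (fun m hm => by exact_mod_cast congrArg (Nat.cast : ℕ → ℝ) (Nat.sum_totient m)) n hn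
  rw [← hinv, Finset.sum_div]
  rw [← Nat.sum_divisorsAntidiagonal (fun a b => (μ a : ℝ) / a)]
  refine Finset.sum_congr rfl fun p hp => ?_
  obtain ⟨hmul, hne⟩ := Nat.mem_divisorsAntidiagonal.mp hp
  have h1 : p.1 ≠ 0 := by intro h0; rw [h0] at hmul; simp at hmul; omega
  have h2 : p.2 ≠ 0 := by intro h0; rw [h0] at hmul; simp at hmul; omega
  have ha : ((p.1:ℝ)) ≠ 0 := Nat.cast_ne_zero.mpr h1
  have hb : ((p.2:ℝ)) ≠ 0 := Nat.cast_ne_zero.mpr h2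
  rw [← hmul]
  push_cast
  field_simp

private lemma swap_sum_aux (N : ℕ) :
    ∑ n ∈ Finset.Icc 1 N, (Nat.totient n : ℝ) / n
      = ∑ d ∈ Finset.Icc 1 N, (μ d : ℝ) / d * ((N / d : ℕ) : ℝ) := by
  have hdiv : ∀ n ∈ Finset.Icc 1 N, (Nat.totient n : ℝ) / n
      = ∑ d ∈ Finset.filter (· ∣ n) (Finset.Icc 1 N), (μ d : ℝ) / d := by
    intro n hn
    rw [Finset.mem_Icc] at hn
    rw [totient_div_eq_aux n (by omega)]
    congr 1
    ext d
    simp only [Nat.mem_divisors, Finset.mem_filter, Finset.mem_Icc]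
    constructor
    · rintro ⟨hd, hne⟩
      exact ⟨⟨Nat.pos_of_dvd_of_pos hd (by omega), le_trans (Nat.le_of_dvd (by omega) hd) hn.2⟩, hd⟩
    · rintro ⟨-, hd⟩
      exact ⟨hd, by omega⟩
  rw [Finset.sum_congr rfl hdiv]
  simp_rw [Finset.sum_filter]
  rw [Finset.sum_comm]
  refine Finset.sum_congr rfl fun d hd => ?_
  rw [← Finset.sum_filter, Finset.sum_const, nsmul_eq_mul, mul_comm]
  congr 1
  rw [show Finset.Icc 1 N = Finset.Ioc 0 N from rfl]
  exact_mod_cast congrArg (Nat.cast : ℕ → ℝ) (Nat.Ioc_filter_dvd_card_eq_div N d)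

private lemma harmonic_eq_aux (N : ℕ) :
    ∑ d ∈ Finset.Icc 1 N, (1:ℝ) / d = (harmonic N : ℝ) := by
  rw [harmonic]
  push_cast
  rw [← Finset.Ico_add_one_right_eq_Icc, Finset.sum_Ico_eq_sum_range]
  have he : N + 1 - 1 = N := by omega
  rw [he]
  refine Finset.sum_congr rfl fun i _ => ?_
  rw [one_div]
  congr 1
  push_cast
  ring

theorem phi_over_n_asymptotic :
    ∃ C : ℝ, ∀ x : ℝ, 1 ≤ x →
      |(∑ n ∈ Finset.Icc 1 ⌊x⌋₊, (Nat.totient n : ℝ) / n) - (6 / Real.pi ^ 2) * x| ≤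
        C * (Real.log x + 1) := by
  refine ⟨3, fun x hx => ?_⟩
  set N := ⌊x⌋₊ with hNdef
  have hN1 : 1 ≤ N := Nat.le_floor (by exact_mod_cast hx)
  have hN0 : (0:ℝ) < N := by exact_mod_cast hN1
  have hNx : (N:ℝ) ≤ x := Nat.floor_le (by linarith)
  have hxN : x < (N:ℝ) + 1 := Nat.lt_floor_add_one x
  have hlog : 0 ≤ Real.log x := Real.log_nonneg hx
  set K : ℝ := 6 / Real.pi ^ 2 with hK
  set P : ℝ := ∑ d ∈ Finset.Icc 1 N, (μ d : ℝ) / d ^ 2 with hP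
  have hKts : K = ∑' d : ℕ, (μ d : ℝ) / d ^ 2 := tsum_mu_aux.symm
  -- term 1
  have hterm1 : |(∑ d ∈ Finset.Icc 1 N, (μ d : ℝ) / d * ((N / d : ℕ) : ℝ)) - x * P|
      ≤ 1 + Real.log x := by
    rw [hP, Finset.mul_sum, ← Finset.sum_sub_distrib]
    calc |∑ d ∈ Finset.Icc 1 N, ((μ d : ℝ) / d * ((N / d : ℕ) : ℝ) - x * ((μ d : ℝ) / d ^ 2))|
        ≤ ∑ d ∈ Finset.Icc 1 N, |(μ d : ℝ) / d * ((N / d : ℕ) : ℝ) - x * ((μ d : ℝ) / d ^ 2)| :=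
          Finset.abs_sum_le_sum_abs _ _
      _ ≤ ∑ d ∈ Finset.Icc 1 N, (1:ℝ) / d := by
          refine Finset.sum_le_sum fun d hd => ?_
          rw [Finset.mem_Icc] at hd
          have hd0 : (0:ℝ) < d := by exact_mod_cast hd.1
          have hfac : (μ d : ℝ) / d * ((N / d : ℕ) : ℝ) - x * ((μ d : ℝ) / d ^ 2)
              = (μ d : ℝ) / d * (((N / d : ℕ) : ℝ) - x / d) := by
            field_simp
          rw [hfac, abs_mul, abs_div, Nat.abs_cast]
          have hmu : |(μ d : ℝ)| ≤ 1 := by exact_mod_cast (abs_moebius_le_one (n := d))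
          have hbd : |((N / d : ℕ) : ℝ) - x / d| ≤ 1 := by
            have hle : ((N / d : ℕ) : ℝ) ≤ (N:ℝ) / d := Nat.cast_div_le
            have hle2 : (N:ℝ) / d ≤ x / d := by gcongr
            have hlt : (N:ℕ) < (N / d + 1) * d := by
              have h1 := Nat.div_add_mod N d
              have h2 := Nat.mod_lt N (show 0 < d by omega)
              calc N = d * (N / d) + N % d := h1.symm
                _ < d * (N / d) + d := by omega
                _ = (N / d + 1) * d := by ring
            have hlt' : x < (((N / d : ℕ) : ℝ) + 1) * d := by
              have hc : ((N:ℕ):ℝ) + 1 ≤ ((((N / d + 1) * d : ℕ)):ℝ) := by exact_mod_cast hlt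
              push_cast at hc
              linarith
            have hxd : x / d < ((N / d : ℕ) : ℝ) + 1 := by
              rw [div_lt_iff₀ hd0]
              linarith
            rw [abs_le]
            constructor <;> linarith
          calc |(μ d : ℝ)| / d * |((N / d : ℕ) : ℝ) - x / d|
              ≤ 1 / d * 1 := by
                apply mul_le_mul _ hbd (abs_nonneg _) (by positivity)
                gcongr
            _ = 1 / d := by ring
      _ = (harmonic N : ℝ) := harmonic_eq_aux N
      _ ≤ 1 + Real.log x := harmonic_floor_le_one_add_log x hx
  -- term 2
  have hterm2 : x * |P - K| ≤ 2 := by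
    have h2 : |P - K| ≤ 1 / N := by
      rw [abs_sub_comm, hKts]
      exact tail_bound_aux N hN1
    calc x * |P - K| ≤ x * (1 / N) := by
          apply mul_le_mul_of_nonneg_left h2 (by linarith)
      _ ≤ 2 := by
          rw [mul_one_div, div_le_iff₀ hN0]
          have : (1:ℝ) ≤ N := by exact_mod_cast hN1
          linarith
  rw [swap_sum_aux N]
  have hdecomp : (∑ d ∈ Finset.Icc 1 N, (μ d : ℝ) / d * ((N / d : ℕ) : ℝ)) - K * x
      = ((∑ d ∈ Finset.Icc 1 N, (μ d : ℝ) / d * ((N / d : ℕ) : ℝ)) - x * P) + x * (P - K) := by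
    ring
  rw [hdecomp]
  calc |_ + x * (P - K)| ≤ |(∑ d ∈ Finset.Icc 1 N, (μ d : ℝ) / d * ((N / d : ℕ) : ℝ)) - x * P|
        + |x * (P - K)| := abs_add_le _ _
    _ ≤ (1 + Real.log x) + 2 := by
        refine add_le_add hterm1 ?_
        rw [abs_mul, abs_of_nonneg (by linarith : (0:ℝ) ≤ x)]
        exact hterm2
    _ ≤ 3 * (Real.log x + 1) := by linarith
end

section
/- ∑_{n ≤ x} φ(n) = (3/π²)x² + O(x log x); i.e., there is an absolute constant C with |∑_{n ≤ x} φ(n) − (3/π²)x²| ≤ C·x·(log x + 1) for all x ≥ 1. -/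
open Finset

namespace SummatoryPhi

open ArithmeticFunction
open scoped ArithmeticFunction.Moebius

lemma totient_eq_sum (n : ℕ) (hn : 0 < n) :
    (Nat.totient n : ℝ) = ∑ p ∈ n.divisorsAntidiagonal, (μ p.1 : ℝ) * (p.2 : ℝ) := by
  have h := (ArithmeticFunction.sum_eq_iff_sum_mul_moebius_eq
      (R := ℝ) (f := fun m => (Nat.totient m : ℝ)) (g := fun m => (m : ℝ))).mp ?_ n hn
  · exact h.symm
  · intro m hm
    exact_mod_cast congrArg (Nat.cast : ℕ → ℝ) (Nat.sum_totient m)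

lemma swap_sum (N : ℕ) :
    ∑ n ∈ Icc 1 N, (Nat.totient n : ℝ)
      = ∑ d ∈ Icc 1 N, (μ d : ℝ) * ∑ q ∈ Icc 1 (N / d), (q : ℝ) := by
  rw [Finset.sum_congr rfl (fun n hn => totient_eq_sum n (by
    exact lt_of_lt_of_le Nat.zero_lt_one (Finset.mem_Icc.mp hn).1))]
  simp_rw [Finset.mul_sum]
  rw [Finset.sum_sigma', Finset.sum_sigma']
  refine Finset.sum_nbij' (fun p => ⟨p.2.1, p.2.2⟩) (fun p => ⟨p.1 * p.2, (p.1, p.2)⟩)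
    ?_ ?_ ?_ ?_ ?_
  · rintro ⟨n, d, q⟩ hp
    simp only [Finset.mem_sigma, Finset.mem_Icc, Nat.mem_divisorsAntidiagonal] at hp ⊢
    obtain ⟨⟨hn1, hnN⟩, hdq, hn0⟩ := hp
    subst hdq
    have hd0 : 0 < d := Nat.pos_of_ne_zero (fun h => hn0 (by simp [h]))
    have hq0 : 0 < q := Nat.pos_of_ne_zero (fun h => hn0 (by simp [h]))
    refine ⟨⟨hd0, le_trans (Nat.le_mul_of_pos_right d hq0) hnN⟩, hq0, ?_⟩
    rw [Nat.le_div_iff_mul_le hd0, mul_comm]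
    exact hnN
  · rintro ⟨d, q⟩ hp
    simp only [Finset.mem_sigma, Finset.mem_Icc, Nat.mem_divisorsAntidiagonal] at hp ⊢
    obtain ⟨⟨hd1, hdN⟩, hq1, hqN⟩ := hp
    have hle : d * q ≤ N := by
      rw [mul_comm]
      exact (Nat.le_div_iff_mul_le hd1).mp hqN
    exact ⟨⟨Nat.mul_pos hd1 hq1, hle⟩, trivial, (Nat.mul_pos hd1 hq1).ne'⟩
  · rintro ⟨n, d, q⟩ hp
    simp only [Finset.mem_sigma, Finset.mem_Icc, Nat.mem_divisorsAntidiagonal] at hp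
    obtain ⟨_, hdq, _⟩ := hp
    simp [hdq]
  · rintro ⟨d, q⟩ _; rfl
  · rintro ⟨n, d, q⟩ _; rfl

lemma gauss_sum (m : ℕ) : ∑ q ∈ Icc 1 m, (q : ℝ) = m * (m + 1) / 2 := by
  induction m with
  | zero => simp
  | succ k ih =>
    rw [Finset.sum_Icc_succ_top (by omega)]
    push_cast
    rw [ih]
    ring

lemma moebius_summable : Summable (fun d : ℕ => (μ d : ℝ) / d ^ 2) := by
  refine Summable.of_norm_bounded (g := fun d : ℕ => 1 / (d : ℝ) ^ 2)
    (Real.summable_one_div_nat_pow.mpr one_lt_two) (fun d => ?_)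
  rw [Real.norm_eq_abs, abs_div, abs_pow, Nat.abs_cast]
  rcases eq_or_ne d 0 with rfl | hd
  · simp
  · have hd' : (0 : ℝ) < (d : ℝ) := by exact_mod_cast Nat.pos_of_ne_zero hd
    exact div_le_div₀ zero_le_one
      (by exact_mod_cast ArithmeticFunction.abs_moebius_le_one) (by positivity) le_rfl

lemma moebius_tsum : ∑' d : ℕ, (μ d : ℝ) / d ^ 2 = 6 / Real.pi ^ 2 := by
  have h2 : (1 : ℝ) < (2 : ℂ).re := by norm_num
  have hz := ArithmeticFunction.LSeries_zeta_mul_Lseries_moebius h2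
  rw [ArithmeticFunction.LSeries_zeta_eq_riemannZeta h2, riemannZeta_two] at hz
  have hpi : ((Real.pi : ℂ)) ^ 2 ≠ 0 :=
    pow_ne_zero 2 (Complex.ofReal_ne_zero.mpr Real.pi_ne_zero)
  have hL : LSeries (fun n => (μ n : ℂ)) 2 = ((6 / Real.pi ^ 2 : ℝ) : ℂ) := by
    push_cast
    rw [eq_div_iff hpi]
    linear_combination 6 * hz
  have hterm : ∀ n : ℕ, LSeries.term (fun n => (μ n : ℂ)) 2 n
      = ((μ n : ℝ) / (n : ℝ) ^ 2 : ℝ) := by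
    intro n
    rw [LSeries.term_def]
    rcases eq_or_ne n 0 with rfl | hn
    · simp
    · rw [if_neg hn]
      have : (n : ℂ) ^ (2 : ℂ) = ((n : ℂ)) ^ (2 : ℕ) := by
        rw [show (2 : ℂ) = ((2 : ℕ) : ℂ) by norm_num, Complex.cpow_natCast]
      rw [this]
      push_cast
      ring
  have hcast : LSeries (fun n => (μ n : ℂ)) 2 = ((∑' d : ℕ, (μ d : ℝ) / d ^ 2 : ℝ) : ℂ) := by
    rw [LSeries, Complex.ofReal_tsum]
    exact tsum_congr hterm
  rw [hcast] at hL
  exact_mod_cast hL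

lemma tail_bound (N : ℕ) (hN : 1 ≤ N) :
    ∑' i : ℕ, (1 : ℝ) / ((i + (N + 1) : ℕ) : ℝ) ^ 2 ≤ 1 / (N : ℝ) := by
  have hsum : Summable (fun i : ℕ => (1 : ℝ) / ((i + (N + 1) : ℕ) : ℝ) ^ 2) :=
    (summable_nat_add_iff (f := fun n : ℕ => (1 : ℝ) / (n : ℝ) ^ 2) (N + 1)).mpr
      ((Real.summable_one_div_nat_pow (p := 2)).mpr one_lt_two)
  refine Summable.tsum_le_of_sum_range_le hsum (fun M => ?_)
  have key : ∑ i ∈ Finset.range M, (1 : ℝ) / ((i + (N + 1) : ℕ) : ℝ) ^ 2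
      = ∑ i ∈ Finset.Ioc N (N + M), ((i : ℝ) ^ 2)⁻¹ := by
    rw [← Finset.Icc_add_one_left_eq_Ioc, ← Finset.Ico_add_one_right_eq_Icc, Finset.sum_Ico_eq_sum_range]
    have hM : N + M + 1 - (N + 1) = M := by omega
    simp only [Nat.succ_eq_add_one, hM]
    exact Finset.sum_congr rfl (fun i _ => by rw [add_comm i (N + 1), one_div])
  rw [key]
  rcases Nat.eq_zero_or_pos M with rfl | hM
  · simp only [Nat.add_zero, Finset.Ioc_self, Finset.sum_empty]
    positivity
  · refine le_trans (sum_Ioc_inv_sq_le_sub (by omega) (by omega)) ?_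
    rw [one_div]
    have h0 : (0 : ℝ) ≤ ((N + M : ℕ) : ℝ)⁻¹ := by positivity
    linarith

lemma moebius_partial (N : ℕ) (hN : 1 ≤ N) :
    |(∑ d ∈ Icc 1 N, (μ d : ℝ) / d ^ 2) - 6 / Real.pi ^ 2| ≤ 1 / (N : ℝ) := by
  have hsum := moebius_summable
  have hrange : ∑ d ∈ Finset.range (N + 1), (μ d : ℝ) / d ^ 2
      = ∑ d ∈ Icc 1 N, (μ d : ℝ) / d ^ 2 := by
    have hset : Finset.range (N + 1) = insert 0 (Icc 1 N) := by
      ext i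
      simp only [Finset.mem_range, Finset.mem_insert, Finset.mem_Icc]
      omega
    rw [hset, Finset.sum_insert (by simp)]
    simp
  have hsplit := Summable.sum_add_tsum_nat_add (f := fun d : ℕ => (μ d : ℝ) / d ^ 2) (N + 1) hsum
  have key : (∑ d ∈ Icc 1 N, (μ d : ℝ) / d ^ 2) - 6 / Real.pi ^ 2
      = -∑' i : ℕ, (μ (i + (N + 1)) : ℝ) / ((i + (N + 1) : ℕ) : ℝ) ^ 2 := by
    rw [← moebius_tsum, ← hsplit, hrange]
    ring
  rw [key, abs_neg]
  have hs1 : Summable (fun i : ℕ => (μ (i + (N + 1)) : ℝ) / ((i + (N + 1) : ℕ) : ℝ) ^ 2) :=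
    (summable_nat_add_iff (f := fun d : ℕ => (μ d : ℝ) / d ^ 2) (N + 1)).mpr hsum
  have hs2 : Summable (fun i : ℕ => (1 : ℝ) / ((i + (N + 1) : ℕ) : ℝ) ^ 2) :=
    (summable_nat_add_iff (f := fun n : ℕ => (1 : ℝ) / (n : ℝ) ^ 2) (N + 1)).mpr
      ((Real.summable_one_div_nat_pow (p := 2)).mpr one_lt_two)
  have habs : ∀ i : ℕ, |(μ (i + (N + 1)) : ℝ) / ((i + (N + 1) : ℕ) : ℝ) ^ 2|
      ≤ (1 : ℝ) / ((i + (N + 1) : ℕ) : ℝ) ^ 2 := by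
    intro i
    rw [abs_div, abs_pow, Nat.abs_cast]
    have hd' : (0 : ℝ) < ((i + (N + 1) : ℕ) : ℝ) := by positivity
    exact div_le_div₀ zero_le_one
      (by exact_mod_cast ArithmeticFunction.abs_moebius_le_one) (by positivity) le_rfl
  have h1 : |∑' i : ℕ, (μ (i + (N + 1)) : ℝ) / ((i + (N + 1) : ℕ) : ℝ) ^ 2|
      ≤ ∑' i : ℕ, |(μ (i + (N + 1)) : ℝ) / ((i + (N + 1) : ℕ) : ℝ) ^ 2| := by
    simpa only [Real.norm_eq_abs] using norm_tsum_le_tsum_norm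
      (f := fun i : ℕ => (μ (i + (N + 1)) : ℝ) / ((i + (N + 1) : ℕ) : ℝ) ^ 2) hs1.abs
  calc |∑' i : ℕ, (μ (i + (N + 1)) : ℝ) / ((i + (N + 1) : ℕ) : ℝ) ^ 2|
      ≤ ∑' i : ℕ, |(μ (i + (N + 1)) : ℝ) / ((i + (N + 1) : ℕ) : ℝ) ^ 2| := h1
    _ ≤ ∑' i : ℕ, (1 : ℝ) / ((i + (N + 1) : ℕ) : ℝ) ^ 2 := Summable.tsum_le_tsum habs hs1.abs hs2
    _ ≤ 1 / (N : ℝ) := tail_bound N hN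

lemma harmonic_bound (N : ℕ) (hN : 1 ≤ N) :
    ∑ d ∈ Icc 1 N, ((d : ℝ))⁻¹ ≤ Real.log N + 1 := by
  have h := harmonic_le_one_add_log N
  have heq : ∑ d ∈ Icc 1 N, ((d : ℝ))⁻¹ = ((harmonic N : ℚ) : ℝ) := by
    rw [harmonic, Rat.cast_sum, ← Finset.Ico_add_one_right_eq_Icc, Finset.sum_Ico_eq_sum_range]
    simp only [Nat.add_sub_cancel]
    refine Finset.sum_congr rfl (fun i _ => ?_)
    push_cast
    rw [add_comm 1 (i : ℝ)]
  rw [heq]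
  linarith

end SummatoryPhi

theorem summatory_phi_asymptotic :
    ∃ C : ℝ, ∀ x : ℝ, 1 ≤ x →
      |(∑ n ∈ Finset.Icc 1 ⌊x⌋₊, (Nat.totient n : ℝ)) - (3 / Real.pi ^ 2) * x ^ 2| ≤
        C * x * (Real.log x + 1) := by
  classical
  use 4
  intro x hx
  set N := ⌊x⌋₊ with hNdef
  have hN1 : 1 ≤ N := Nat.le_floor (by exact_mod_cast hx)
  have hx0 : (0 : ℝ) < x := by linarith
  have hNx : (N : ℝ) ≤ x := Nat.floor_le (le_of_lt hx0)
  have hxN : x < N + 1 := Nat.lt_floor_add_one x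
  have hNpos : (0 : ℝ) < N := by exact_mod_cast hN1
  rw [SummatoryPhi.swap_sum]
  rw [Finset.sum_congr rfl (fun d _ => by rw [SummatoryPhi.gauss_sum] :
    ∀ d ∈ Icc 1 N, (ArithmeticFunction.moebius d : ℝ) * ∑ q ∈ Icc 1 (N / d), (q : ℝ)
      = (ArithmeticFunction.moebius d : ℝ) * ((N / d : ℕ) * ((N / d : ℕ) + 1) / 2))]
  have decomp : (∑ d ∈ Icc 1 N, (ArithmeticFunction.moebius d : ℝ)
        * ((N / d : ℕ) * ((N / d : ℕ) + 1) / 2)) - 3 / Real.pi ^ 2 * x ^ 2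
      = (∑ d ∈ Icc 1 N, ((ArithmeticFunction.moebius d : ℝ)
          * ((N / d : ℕ) * ((N / d : ℕ) + 1) / 2)
          - (ArithmeticFunction.moebius d : ℝ) / d ^ 2 * (x ^ 2 / 2)))
        + ((∑ d ∈ Icc 1 N, (ArithmeticFunction.moebius d : ℝ) / d ^ 2) - 6 / Real.pi ^ 2)
          * (x ^ 2 / 2) := by
    rw [Finset.sum_sub_distrib, ← Finset.sum_mul]
    ring
  rw [decomp]
  -- per-term bound
  have perd : ∀ d ∈ Icc 1 N, |(ArithmeticFunction.moebius d : ℝ)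
      * ((N / d : ℕ) * ((N / d : ℕ) + 1) / 2)
      - (ArithmeticFunction.moebius d : ℝ) / d ^ 2 * (x ^ 2 / 2)| ≤ 3 / 2 * (x / d) := by
    intro d hd
    obtain ⟨hd1, hdN⟩ := Finset.mem_Icc.mp hd
    have hd0 : (0 : ℝ) < d := by exact_mod_cast hd1
    have hm : ((N / d : ℕ) : ℝ) = (⌊x / d⌋₊ : ℝ) := by
      rw [hNdef, ← Nat.floor_div_natCast x d]
    have hy1 : (1 : ℝ) ≤ x / d := by
      rw [le_div_iff₀ hd0, one_mul]
      calc (d : ℝ) ≤ N := by exact_mod_cast hdN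
        _ ≤ x := hNx
    have hmle : ((N / d : ℕ) : ℝ) ≤ x / d := by
      rw [hm]; exact Nat.floor_le (by positivity)
    have hlt : x / d < ((N / d : ℕ) : ℝ) + 1 := by
      rw [hm]; exact Nat.lt_floor_add_one _
    have hmu : |(ArithmeticFunction.moebius d : ℝ)| ≤ 1 := by
      exact_mod_cast ArithmeticFunction.abs_moebius_le_one
    have hfact : (ArithmeticFunction.moebius d : ℝ)
        * ((N / d : ℕ) * ((N / d : ℕ) + 1) / 2)
        - (ArithmeticFunction.moebius d : ℝ) / d ^ 2 * (x ^ 2 / 2)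
        = (ArithmeticFunction.moebius d : ℝ)
          * ((N / d : ℕ) * ((N / d : ℕ) + 1) / 2 - (x / d) ^ 2 / 2) := by
      field_simp
    rw [hfact, abs_mul]
    have hm0 : (0 : ℝ) ≤ ((N / d : ℕ) : ℝ) := Nat.cast_nonneg _
    have hb : |((N / d : ℕ) : ℝ) * ((N / d : ℕ) + 1) / 2 - (x / d) ^ 2 / 2|
        ≤ 3 / 2 * (x / d) := by
      rw [abs_le]
      constructor
      · nlinarith [hmle, hlt, hy1, hm0]
      · nlinarith [hmle, hlt, hy1, hm0]
    calc |(ArithmeticFunction.moebius d : ℝ)|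
          * |((N / d : ℕ) : ℝ) * ((N / d : ℕ) + 1) / 2 - (x / d) ^ 2 / 2|
        ≤ 1 * (3 / 2 * (x / d)) := mul_le_mul hmu hb (abs_nonneg _) one_pos.le
      _ = 3 / 2 * (x / d) := one_mul _
  have hterm1 : |∑ d ∈ Icc 1 N, ((ArithmeticFunction.moebius d : ℝ)
        * ((N / d : ℕ) * ((N / d : ℕ) + 1) / 2)
        - (ArithmeticFunction.moebius d : ℝ) / d ^ 2 * (x ^ 2 / 2))|
      ≤ 3 / 2 * x * (Real.log x + 1) := by
    calc _ ≤ ∑ d ∈ Icc 1 N, |(ArithmeticFunction.moebius d : ℝ)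
          * ((N / d : ℕ) * ((N / d : ℕ) + 1) / 2)
          - (ArithmeticFunction.moebius d : ℝ) / d ^ 2 * (x ^ 2 / 2)| :=
        Finset.abs_sum_le_sum_abs _ _
      _ ≤ ∑ d ∈ Icc 1 N, 3 / 2 * (x / d) := Finset.sum_le_sum perd
      _ = 3 / 2 * x * ∑ d ∈ Icc 1 N, ((d : ℝ))⁻¹ := by
          rw [Finset.mul_sum]
          exact Finset.sum_congr rfl (fun d _ => by rw [div_eq_mul_inv]; ring)
      _ ≤ 3 / 2 * x * (Real.log N + 1) := by
          have := SummatoryPhi.harmonic_bound N hN1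
          nlinarith [hx0]
      _ ≤ 3 / 2 * x * (Real.log x + 1) := by
          have hlog : Real.log N ≤ Real.log x := Real.log_le_log hNpos hNx
          nlinarith [hx0]
  have hterm2 : |((∑ d ∈ Icc 1 N, (ArithmeticFunction.moebius d : ℝ) / d ^ 2)
        - 6 / Real.pi ^ 2) * (x ^ 2 / 2)| ≤ x := by
    rw [abs_mul, abs_of_nonneg (by positivity : (0 : ℝ) ≤ x ^ 2 / 2)]
    have h2 := SummatoryPhi.moebius_partial N hN1
    have hx2N : x ≤ 2 * N := by
      push_cast at hxN ⊢
      have : (1 : ℝ) ≤ N := by exact_mod_cast hN1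
      linarith
    calc |(∑ d ∈ Icc 1 N, (ArithmeticFunction.moebius d : ℝ) / d ^ 2) - 6 / Real.pi ^ 2|
          * (x ^ 2 / 2) ≤ 1 / N * (x ^ 2 / 2) := by
          apply mul_le_mul_of_nonneg_right h2 (by positivity)
      _ ≤ x := by
          rw [one_div_mul_eq_div, div_le_iff₀ hNpos]
          nlinarith [hx2N, hx0]
  have hlogx : 0 ≤ Real.log x := Real.log_nonneg hx
  calc |_ + _| ≤ _ + _ := abs_add_le _ _
    _ ≤ 3 / 2 * x * (Real.log x + 1) + x := add_le_add hterm1 hterm2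
    _ ≤ 4 * x * (Real.log x + 1) := by nlinarith [hx0, hlogx]
end
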